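/- Let I₁, I₂ be Holevo instruments H^{(A,α)} ∈ In(H₁,H₂) and H^{(B,β)} ∈ In(H₂,H₃). Their sequential product I_{x₁x₂}(ρ) = H^{(B,β)}_{x₂}(H^{(A,α)}_{x₁}(ρ)) equals the Holevo bi-instrument H^{(C,β)}_{x₁x₂}(ρ) = tr(ρ C_{x₁x₂}) β_{x₂}, where C_{x₁x₂} = tr(α_{x₁} B_{x₂}) A_{x₁} is a bi-observable; consequently the sequential product of two Holevo instruments is Holevo and measures C. -/

import Mathlib

open Matrix BigOperators Finset ComplexOrder

noncomputable section

/-- An effect on a finite-dimensional Hilbert space (modeled as a matrix):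
`0 ≤ A ≤ I`. -/
def IsEffect {d : Type} [Fintype d] [DecidableEq d] (A : Matrix d d ℂ) : Prop :=
  A.PosSemidef ∧ (1 - A).PosSemidef

/-- An observable: a finite family of effects summing to the identity. -/
def IsObservable {Ω d : Type} [Fintype Ω] [Fintype d] [DecidableEq d]
    (A : Ω → Matrix d d ℂ) : Prop :=
  (∀ x, IsEffect (A x)) ∧ ∑ x, A x = 1

/-- A state: a positive operator of trace one. -/
def IsState {d : Type} [Fintype d] [DecidableEq d] (ρ : Matrix d d ℂ) : Prop :=
  ρ.PosSemidef ∧ ρ.trace = 1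


lemma aux_trace_psd_nonneg {d : Type} [Fintype d] [DecidableEq d]
    {P : Matrix d d ℂ} (hP : P.PosSemidef) : 0 ≤ P.trace := by
  refine Finset.sum_nonneg fun i _ => ?_
  exact hP.diag_nonneg

open scoped MatrixOrder in
lemma aux_trace_mul_nonneg {d : Type} [Fintype d] [DecidableEq d]
    {P Q : Matrix d d ℂ} (hP : P.PosSemidef) (hQ : Q.PosSemidef) :
    0 ≤ (P * Q).trace := by
  obtain ⟨S, hS⟩ := CStarAlgebra.nonneg_iff_eq_star_mul_self.mp hP.nonneg
  have key : (P * Q).trace = (S * Q * Sᴴ).trace := by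
    rw [hS, star_eq_conjTranspose, Matrix.mul_assoc, Matrix.trace_mul_comm, Matrix.mul_assoc]
  rw [key]
  exact aux_trace_psd_nonneg (hQ.mul_mul_conjTranspose_same _)

lemma aux_smul_psd {d : Type} [Fintype d] [DecidableEq d]
    {c : ℂ} (hc : 0 ≤ c) {P : Matrix d d ℂ} (hP : P.PosSemidef) :
    (c • P).PosSemidef := by
  constructor
  · have : star c = c := by
      rw [Complex.star_def, Complex.conj_eq_iff_im]
      exact (Complex.le_def.mp hc).2.symm
    rw [Matrix.IsHermitian, Matrix.conjTranspose_smul, this, hP.isHermitian]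
  · intro x
    exact (hP.smul hc).2 x

/-- the sequential product of the Holevo instruments
`H^{(A,α)} ∈ In(H₁,H₂)` and `H^{(B,β)} ∈ In(H₂,H₃)` equals the Holevo
bi-instrument `H^{(C,β)}` with `C_{x₁x₂} = tr(α_{x₁} B_{x₂}) A_{x₁}`:
`C` is a bi-observable and
`H^{(B,β)}_{x₂}(H^{(A,α)}_{x₁}(ρ)) = tr(ρ C_{x₁x₂}) β_{x₂}` for all `ρ`;
consequently the sequential product is Holevo and measures `C`. -/
theorem holevo_sequential_product {Ω₁ Ω₂ d₁ d₂ d₃ : Type}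
    [Fintype Ω₁] [Fintype Ω₂]
    [Fintype d₁] [DecidableEq d₁] [Fintype d₂] [DecidableEq d₂]
    [Fintype d₃] [DecidableEq d₃]
    (A : Ω₁ → Matrix d₁ d₁ ℂ) (hA : IsObservable A)
    (B : Ω₂ → Matrix d₂ d₂ ℂ) (hB : IsObservable B)
    (α : Ω₁ → Matrix d₂ d₂ ℂ) (hα : ∀ x, IsState (α x))
    (β : Ω₂ → Matrix d₃ d₃ ℂ) (hβ : ∀ y, IsState (β y)) :
    IsObservable (fun p : Ω₁ × Ω₂ => ((α p.1 * B p.2).trace) • A p.1) ∧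
    ∀ (ρ : Matrix d₁ d₁ ℂ) (x₁ : Ω₁) (x₂ : Ω₂),
      ((((ρ * A x₁).trace • α x₁) * B x₂).trace • β x₂) =
        ((ρ * (((α x₁ * B x₂).trace) • A x₁)).trace • β x₂) := by
  have hc0 : ∀ x y, 0 ≤ (α x * B y).trace :=
    fun x y => aux_trace_mul_nonneg (hα x).1 (hB.1 y).1
  have hc1 : ∀ x y, (α x * B y).trace ≤ 1 := by
    intro x y
    have h := aux_trace_mul_nonneg (hα x).1 (hB.1 y).2
    have : (α x * (1 - B y)).trace = 1 - (α x * B y).trace := by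
      rw [Matrix.mul_sub, Matrix.mul_one, Matrix.trace_sub, (hα x).2]
    rw [this] at h
    exact sub_nonneg.mp h
  constructor
  · constructor
    · rintro ⟨x, y⟩
      constructor
      · exact aux_smul_psd (hc0 x y) (hA.1 x).1
      · have key : (1 : Matrix d₁ d₁ ℂ) - (α x * B y).trace • A x
            = (1 - (α x * B y).trace) • (1 : Matrix d₁ d₁ ℂ)
              + (α x * B y).trace • (1 - A x) := by
          rw [sub_smul, one_smul, smul_sub]
          abel
        rw [key]
        exact (aux_smul_psd (by simpa using hc1 x y) Matrix.PosSemidef.one).add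
          (aux_smul_psd (hc0 x y) (hA.1 x).2)
    · rw [Fintype.sum_prod_type]
      have : ∀ x : Ω₁, ∑ y : Ω₂, (α x * B y).trace • A x = A x := by
        intro x
        rw [← Finset.sum_smul]
        have : ∑ y : Ω₂, (α x * B y).trace = 1 := by
          rw [← Matrix.trace_sum,
            show ∑ y : Ω₂, α x * B y = α x * ∑ y, B y by rw [Finset.mul_sum],
            hB.2, Matrix.mul_one, (hα x).2]
        rw [this, one_smul]
      simp_rw [this]
      exact hA.2
  · intro ρ x₁ x₂
    simp [Matrix.smul_mul, Matrix.mul_smul, Matrix.trace_smul, smul_smul, mul_comm]
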